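/- Fix M ∈ {1,…,d}, let φ be the ReLU activation φ(t) = max(t,0), and let F_M be the class of boolean-valued functions x ↦ φ'(⟨w,x⟩ + b) = 1_{⟨w,x⟩ + b > 0} indexed by unit vectors w ∈ ℝ^d with ‖w‖₀ ≤ M and b ∈ ℝ. Then the VC dimension d* of F_M satisfies M ≤ d* ≤ 6 M log(e d / M). -/

import Mathlib

open Set

/-- A class `F` of `Prop`-valued classifiers shatters a finite set `s` if every
subset of `s` can be picked out by some member of `F`. -/
def Shatters {α : Type*} (F : Set (α → Prop)) (s : Finset α) : Prop :=
  ∀ t ⊆ s, ∃ f ∈ F, ∀ x ∈ s, f x ↔ x ∈ t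

private lemma aux_halving {n m : ℕ} (h : 2*m < n) :
    2 * ∑ k ∈ Finset.Iic m, n.choose k ≤ 2^n := by
  classical
  have hmn : m < n := by omega
  have hsymm : ∑ k ∈ Finset.Iic m, n.choose k = ∑ k ∈ Finset.Icc (n-m) n, n.choose k := by
    refine Finset.sum_nbij' (fun k => n - k) (fun k => n - k) ?_ ?_ ?_ ?_ ?_
    · intro a ha; simp only [Finset.mem_Iic] at ha; simp only [Finset.mem_Icc]; omega
    · intro a ha; simp only [Finset.mem_Icc] at ha; simp only [Finset.mem_Iic]; omega
    · intro a ha; simp only [Finset.mem_Iic] at ha; omega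
    · intro a ha; simp only [Finset.mem_Icc] at ha; omega
    · intro a ha; simp only [Finset.mem_Iic] at ha
      exact (Nat.choose_symm (by omega : a ≤ n)).symm
  have hdisj : Disjoint (Finset.Iic m) (Finset.Icc (n-m) n) := by
    rw [Finset.disjoint_left]
    intro a ha hb
    simp only [Finset.mem_Iic] at ha
    simp only [Finset.mem_Icc] at hb
    omega
  have hsub : Finset.Iic m ∪ Finset.Icc (n-m) n ⊆ Finset.range (n+1) := by
    intro a ha
    simp only [Finset.mem_union, Finset.mem_Iic, Finset.mem_Icc] at ha
    simp only [Finset.mem_range]; omega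
  calc 2 * ∑ k ∈ Finset.Iic m, n.choose k
      = ∑ k ∈ Finset.Iic m, n.choose k + ∑ k ∈ Finset.Icc (n-m) n, n.choose k := by
        rw [← hsymm]; ring
    _ = ∑ k ∈ Finset.Iic m ∪ Finset.Icc (n-m) n, n.choose k := (Finset.sum_union hdisj).symm
    _ ≤ ∑ k ∈ Finset.range (n+1), n.choose k := Finset.sum_le_sum_of_subset hsub
    _ = 2^n := Nat.sum_range_choose n

private lemma aux_one_add_inv_pow (M : ℕ) (hM : 1 ≤ M) :
    (1 + 1/(M:ℝ))^M ≤ Real.exp 1 := by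
  have hM0 : (0:ℝ) < M := by exact_mod_cast hM
  have h1 : (1 + 1/(M:ℝ)) ≤ Real.exp (1/(M:ℝ)) := by
    have := Real.add_one_le_exp (1/(M:ℝ)); linarith
  calc (1 + 1/(M:ℝ))^M ≤ Real.exp (1/(M:ℝ))^M := by
        apply pow_le_pow_left₀ (by positivity) h1
    _ = Real.exp ((M:ℝ) * (1/(M:ℝ))) := (Real.exp_nat_mul _ M).symm
    _ = Real.exp 1 := by rw [mul_one_div, div_self (ne_of_gt hM0)]

private lemma aux_fact (M : ℕ) (hM : 1 ≤ M) :
    Real.exp 1 * (M:ℝ)^M ≤ (M.factorial : ℝ) * Real.exp 1 ^ M := by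
  induction M, hM using Nat.le_induction with
  | base => simp
  | succ M hM ih =>
    have hM0 : (0:ℝ) < M := by exact_mod_cast hM
    have key : ((M:ℝ)+1)^M ≤ (M:ℝ)^M * Real.exp 1 := by
      have : ((M:ℝ)+1) = (M:ℝ) * (1 + 1/(M:ℝ)) := by field_simp
      rw [this, mul_pow]
      have := aux_one_add_inv_pow M hM
      have hp : (0:ℝ) ≤ (M:ℝ)^M := by positivity
      nlinarith [this, hp]
    have he : (0:ℝ) < Real.exp 1 := Real.exp_pos 1
    have hfac : (0:ℝ) < (M.factorial : ℝ) := by exact_mod_cast M.factorial_pos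
    push_cast [Nat.factorial_succ, pow_succ]
    have expand : Real.exp 1 * ((M:ℝ)+1)^(M+1) = ((M:ℝ)+1) * (Real.exp 1 * ((M:ℝ)+1)^M) := by
      ring
    calc Real.exp 1 * ((M:ℝ)+1)^(M+1)
        = ((M:ℝ)+1) * (Real.exp 1 * ((M:ℝ)+1)^M) := expand
      _ ≤ ((M:ℝ)+1) * (Real.exp 1 * ((M:ℝ)^M * Real.exp 1)) := by
          apply mul_le_mul_of_nonneg_left _ (by positivity)
          exact mul_le_mul_of_nonneg_left key he.le
      _ = ((M:ℝ)+1) * ((Real.exp 1 * (M:ℝ)^M) * Real.exp 1) := by ring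
      _ ≤ ((M:ℝ)+1) * (((M.factorial:ℝ) * Real.exp 1 ^ M) * Real.exp 1) := by
          apply mul_le_mul_of_nonneg_left _ (by positivity)
          exact mul_le_mul_of_nonneg_right ih he.le
      _ = ((M:ℝ)+1) * (M.factorial:ℝ) * (Real.exp 1 ^ M * Real.exp 1) := by ring

private lemma aux_sum_choose (n D : ℕ) (h1 : 1 ≤ D) (h2 : D ≤ n) :
    ((∑ k ∈ Finset.Iic D, n.choose k : ℕ) : ℝ) ≤ (Real.exp 1 * n / D)^D := by
  have hD0 : (0:ℝ) < D := by exact_mod_cast h1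
  have hn0 : (0:ℝ) < n := by exact_mod_cast lt_of_lt_of_le h1 h2
  set x : ℝ := (D:ℝ) / n with hx
  have hx0 : 0 < x := by positivity
  have hx1 : x ≤ 1 := by
    rw [hx, div_le_one hn0]; exact_mod_cast h2
  have key1 : (∑ k ∈ Finset.Iic D, (n.choose k : ℝ)) * x^D
      ≤ ∑ k ∈ Finset.Iic D, (n.choose k : ℝ) * x^k := by
    rw [Finset.sum_mul]
    apply Finset.sum_le_sum
    intro k hk
    apply mul_le_mul_of_nonneg_left _ (by positivity)
    exact pow_le_pow_of_le_one hx0.le hx1 (Finset.mem_Iic.mp hk)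
  have key2 : ∑ k ∈ Finset.Iic D, (n.choose k : ℝ) * x^k
      ≤ ∑ k ∈ Finset.range (n+1), (n.choose k : ℝ) * x^k := by
    apply Finset.sum_le_sum_of_subset_of_nonneg
    · intro k hk; simp only [Finset.mem_Iic] at hk; simp only [Finset.mem_range]; omega
    · intro k _ _; positivity
  have key3 : ∑ k ∈ Finset.range (n+1), (n.choose k : ℝ) * x^k = (1+x)^n := by
    rw [add_comm (1:ℝ) x, add_pow]
    apply Finset.sum_congr rfl
    intro k _; ring
  have key4 : (1+x)^n ≤ Real.exp 1 ^ D := by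
    have h5 : (1+x) ≤ Real.exp x := by have := Real.add_one_le_exp x; linarith
    calc (1+x)^n ≤ Real.exp x ^ n := pow_le_pow_left₀ (by positivity) h5 n
      _ = Real.exp ((n:ℝ) * x) := (Real.exp_nat_mul _ n).symm
      _ = Real.exp (D:ℝ) := by rw [hx]; congr 1; field_simp
      _ = Real.exp 1 ^ D := by rw [← Real.exp_nat_mul, mul_one]
  have hsum : (∑ k ∈ Finset.Iic D, (n.choose k : ℝ)) * x^D ≤ Real.exp 1 ^ D :=
    le_trans key1 (le_trans key2 (le_of_eq_of_le key3 key4))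
  have hrw : (Real.exp 1 * n / D)^D = Real.exp 1 ^ D / x^D := by
    rw [hx, div_pow, div_pow, mul_pow]
    rw [div_div_eq_mul_div]
  rw [hrw, le_div_iff₀ (by positivity : (0:ℝ) < x^D)]
  push_cast
  exact hsum

private lemma aux_log3 : 2 * Real.log 3 ≤ 3 * Real.log 2 + 1/8 := by
  have h9 : Real.log 9 = 2 * Real.log 3 := by
    rw [show (9:ℝ) = 3^2 by norm_num, Real.log_pow]; push_cast; ring
  have h8 : Real.log 8 = 3 * Real.log 2 := by
    rw [show (8:ℝ) = 2^3 by norm_num, Real.log_pow]; push_cast; ring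
  have h98 : Real.log 9 = Real.log 8 + Real.log (9/8) := by
    rw [← Real.log_mul (by norm_num) (by norm_num)]; norm_num
  have hle : Real.log (9/8) ≤ 9/8 - 1 := Real.log_le_sub_one_of_pos (by norm_num)
  linarith

/-- log x ≥ 1 - 1/x for x > 0 -/

private lemma aux_log_lb {x : ℝ} (hx : 0 < x) : 1 - 1/x ≤ Real.log x := by
  have h := Real.log_le_sub_one_of_pos (show 0 < x⁻¹ by positivity)
  rw [Real.log_inv] at h
  have : x⁻¹ = 1/x := by rw [one_div]
  linarith [this ▸ h]

set_option maxHeartbeats 1000000 in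
private lemma aux_analytic (M : ℕ) (hM : 1 ≤ M) (L n : ℝ)
    (hL : 1 + Real.log (1 + 1/(M:ℝ)) ≤ L) (hn : 6*(M:ℝ)*L ≤ n) :
    (M:ℝ)*L - 1 + ((M:ℝ)+1)*(1 + Real.log n - Real.log ((M:ℝ)+1)) < n * Real.log 2 := by
  have hm1 : (1:ℝ) ≤ (M:ℝ) := by exact_mod_cast hM
  have hM0 : (0:ℝ) < M := by linarith
  set t : ℝ := Real.log (1 + 1/(M:ℝ)) with htdef
  have ht0 : 0 ≤ t := Real.log_nonneg (by
    have : 0 < 1/(M:ℝ) := by positivity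
    linarith)
  have hL1 : 1 ≤ L := by linarith
  have hL0 : 0 < L := by linarith
  set l2 : ℝ := Real.log 2 with hl2def
  have l2a : 0.6931471803 < l2 := Real.log_two_gt_d9
  have l2b : l2 < 0.6931471808 := Real.log_two_lt_d9
  set n0 : ℝ := 6*(M:ℝ)*L with hn0def
  have hn00 : 0 < n0 := by nlinarith
  have hn0' : 0 < n := lt_of_lt_of_le hn00 hn
  -- t bounds
  have ht_up : (M:ℝ) * t ≤ 1 := by
    have h := Real.log_le_sub_one_of_pos (show (0:ℝ) < 1 + 1/(M:ℝ) by positivity)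
    have h2 : t ≤ 1/(M:ℝ) := by rw [htdef]; linarith
    calc (M:ℝ) * t ≤ (M:ℝ) * (1/(M:ℝ)) := by nlinarith
    _ = 1 := by field_simp
  have ht_lo : 1 ≤ ((M:ℝ)+1) * t := by
    have h := aux_log_lb (show (0:ℝ) < 1 + 1/(M:ℝ) by positivity)
    have key : 1 - 1/(1 + 1/(M:ℝ)) = 1/((M:ℝ)+1) := by
      have hMp : ((M:ℝ)+1) ≠ 0 := by positivity
      have e1 : (1:ℝ) + 1/(M:ℝ) = ((M:ℝ)+1)/(M:ℝ) := by field_simp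
      rw [e1, one_div_div]
      field_simp
      ring
    rw [key] at h
    have hMp : (0:ℝ) < (M:ℝ)+1 := by linarith
    calc (1:ℝ) = ((M:ℝ)+1) * (1/((M:ℝ)+1)) := by field_simp
    _ ≤ ((M:ℝ)+1) * t := by nlinarith
  -- log 3 bound
  have l3 : 2 * Real.log 3 ≤ 3 * l2 + 1/8 := aux_log3
  have hlog3_0 : 0 ≤ Real.log 3 := Real.log_nonneg (by norm_num)
  -- Step 1: reduce n to n0
  have hlogn : Real.log n ≤ Real.log n0 + (n - n0)/n0 := by
    have h := Real.log_le_sub_one_of_pos (show 0 < n/n0 by positivity)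
    rw [Real.log_div (ne_of_gt hn0') (ne_of_gt hn00)] at h
    have e : n/n0 - 1 = (n - n0)/n0 := by field_simp
    linarith [e ▸ h]
  have hstep1 : ((M:ℝ)+1) * Real.log n ≤ ((M:ℝ)+1) * Real.log n0 + l2 * (n - n0) := by
    have hnn : 0 ≤ n - n0 := by linarith
    have hq : ((M:ℝ)+1)/n0 ≤ l2 := by
      rw [div_le_iff₀ hn00]
      have h3 : 3*((M:ℝ)+1) ≤ n0 := by nlinarith
      nlinarith
    have h4 : ((M:ℝ)+1)/n0 * (n - n0) ≤ l2 * (n-n0) := mul_le_mul_of_nonneg_right hq hnn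
    have h5 : ((M:ℝ)+1) * ((n-n0)/n0) = ((M:ℝ)+1)/n0 * (n-n0) := by ring
    have h6 : ((M:ℝ)+1) * Real.log n ≤ ((M:ℝ)+1) * (Real.log n0 + (n - n0)/n0) :=
      mul_le_mul_of_nonneg_left hlogn (by linarith)
    nlinarith [h4, h6]
  -- suffices at n = n0
  suffices h0 : (M:ℝ)*L - 1 + ((M:ℝ)+1)*(1 + Real.log n0 - Real.log ((M:ℝ)+1)) < n0 * l2 by
    have e1 : ((M:ℝ)+1)*(1 + Real.log n - Real.log ((M:ℝ)+1))
        = ((M:ℝ)+1) + ((M:ℝ)+1)*Real.log n - ((M:ℝ)+1)*Real.log ((M:ℝ)+1) := by ring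
    have e2 : ((M:ℝ)+1)*(1 + Real.log n0 - Real.log ((M:ℝ)+1))
        = ((M:ℝ)+1) + ((M:ℝ)+1)*Real.log n0 - ((M:ℝ)+1)*Real.log ((M:ℝ)+1) := by ring
    linarith only [hstep1, e1, e2, h0]
  -- Step 2: expand log n0 and reduce L to L0 = 1 + t
  have hlogn0 : Real.log n0 = Real.log 6 + Real.log (M:ℝ) + Real.log L := by
    rw [hn0def, Real.log_mul (by positivity) (ne_of_gt hL0), Real.log_mul (by norm_num) (ne_of_gt hM0)]
  set L0 : ℝ := 1 + t with hL0def
  have hL0ge1 : 1 ≤ L0 := by linarith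
  have hLL0 : L0 ≤ L := by rw [hL0def, htdef]; exact hL
  have hlogL : Real.log L ≤ t + (L - L0) := by
    have h := Real.log_le_sub_one_of_pos (show 0 < L/L0 by positivity)
    rw [Real.log_div (ne_of_gt hL0) (ne_of_gt (show (0:ℝ) < L0 by linarith))] at h
    have e : L/L0 - 1 = (L - L0)/L0 := by field_simp
    have h2 : (L - L0)/L0 ≤ L - L0 := by
      apply div_le_self (by linarith) hL0ge1
    have h3 : Real.log L0 ≤ t := by
      have := Real.log_le_sub_one_of_pos (show (0:ℝ) < L0 by linarith)
      rw [hL0def] at this ⊢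
      linarith
    linarith [e ▸ h]
  -- log M + t = log (M+1) exactly
  have hlogMt : Real.log (M:ℝ) + t = Real.log ((M:ℝ)+1) := by
    rw [htdef, ← Real.log_mul (ne_of_gt hM0) (ne_of_gt (show (0:ℝ) < 1 + 1/(M:ℝ) by positivity))]
    congr 1
    field_simp
  have hlog6 : Real.log 6 = l2 + Real.log 3 := by
    rw [hl2def, ← Real.log_mul (by norm_num) (by norm_num)]; norm_num
  set A : ℝ := (M:ℝ) * L0 with hAdef
  have hA_up : A ≤ (M:ℝ) + 1 := by
    have e : A = (M:ℝ) + (M:ℝ)*t := by rw [hAdef, hL0def]; ring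
    linarith only [e, ht_up]
  have hA_pos : 0 < A := mul_pos hM0 (by linarith)
  -- core inequality at L = L0
  have hb : A - 1 + ((M:ℝ)+1)*(1 + Real.log 6) < 6*A*l2 := by
    rcases eq_or_lt_of_le hm1 with h1 | h2
    · -- M = 1
      have hMeq : (M:ℝ) = 1 := h1.symm
      have htl2 : t = l2 := by
        rw [htdef, hl2def, hMeq]; norm_num
      have hAe : A = 1 + l2 := by rw [hAdef, hL0def, hMeq, htl2]; ring
      rw [hAe, hMeq, hlog6]
      nlinarith [l3, l2a, sq_nonneg (l2 - 0.6931471803)]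
    · -- M ≥ 2
      have hM2 : (2:ℝ) ≤ (M:ℝ) := by
        have : (1:ℕ) < M := by exact_mod_cast h2
        have : (2:ℕ) ≤ M := this
        exact_mod_cast this
      have hA_lo : (M:ℝ) + 2/3 ≤ A := by
        have e : A = (M:ℝ) + (M:ℝ)*t := by rw [hAdef, hL0def]; ring
        have h3 : 2 ≤ 3*((M:ℝ)*t) := by
          nlinarith [ht_lo, ht0, mul_nonneg (show (0:ℝ) ≤ (M:ℝ)-2 by linarith) ht0]
        linarith only [e, h3]
      have p1 : 0.6931471803 * A ≤ l2 * A := mul_le_mul_of_nonneg_right l2a.le hA_pos.le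
      have p2 : l2 * ((M:ℝ)+1) ≤ 0.6931471808 * ((M:ℝ)+1) :=
        mul_le_mul_of_nonneg_right l2b.le (by linarith)
      have hlog3ub : Real.log 3 ≤ (3*(0.6931471808:ℝ) + 1/8)/2 := by linarith only [l3, l2b]
      have p3 : Real.log 3 * ((M:ℝ)+1) ≤ ((3*(0.6931471808:ℝ) + 1/8)/2) * ((M:ℝ)+1) :=
        mul_le_mul_of_nonneg_right hlog3ub (by linarith)
      rw [hlog6]
      have expand : ((M:ℝ)+1)*(1 + (l2 + Real.log 3))
          = ((M:ℝ)+1) + l2*((M:ℝ)+1) + Real.log 3 * ((M:ℝ)+1) := by ring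
      rw [expand]
      linarith only [p1, p2, p3, hA_lo, hA_up, hM2]
  -- combine
  have hLL : 0 ≤ L - L0 := by linarith only [hLL0]
  have h1 : Real.log n0 - Real.log ((M:ℝ)+1) ≤ Real.log 6 + (L - L0) := by
    linarith only [hlogn0, hlogL, hlogMt]
  have h2 : ((M:ℝ)+1)*(1 + Real.log n0 - Real.log ((M:ℝ)+1))
      ≤ ((M:ℝ)+1)*(1 + Real.log 6 + (L - L0)) := by
    apply mul_le_mul_of_nonneg_left _ (by linarith : (0:ℝ) ≤ (M:ℝ)+1)
    linarith only [h1]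
  have h3 : (0:ℝ) ≤ 6*(M:ℝ)*l2 - (2*(M:ℝ)+1) := by nlinarith [l2a, hm1]
  have h4 : (0:ℝ) ≤ (6*(M:ℝ)*l2 - (2*(M:ℝ)+1)) * (L - L0) := mul_nonneg h3 hLL
  have e5 : n0 * l2 = 6*A*l2 + 6*(M:ℝ)*l2*(L-L0) := by
    rw [hn0def, hAdef]; ring
  have e6 : (M:ℝ)*L = A + (M:ℝ)*(L-L0) := by rw [hAdef]; ring
  have e7 : ((M:ℝ)+1)*(1 + Real.log 6 + (L - L0))
      = ((M:ℝ)+1)*(1 + Real.log 6) + ((M:ℝ)+1)*(L-L0) := by ring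
  nlinarith [h2, hb, h4, e5, e6, e7]

private lemma aux_trace {d : ℕ} (S : Finset (Fin d)) (u : Finset (Fin d → ℝ))
    (hu : S.card + 2 ≤ u.card)
    (H : ∀ t ⊆ u, ∃ (w : Fin d → ℝ) (b : ℝ), {i | w i ≠ 0} ⊆ ↑S ∧
      ∀ x ∈ u, (0 < (∑ i, w i * x i) + b ↔ x ∈ t)) : False := by
  classical
  set V := ((↥S → ℝ) × ℝ)
  let v : ↥u → V := fun x => (fun i => (x : Fin d → ℝ) i.1, 1)
  have hdim : Module.finrank ℝ V = S.card + 1 := by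
    simp [V, Module.finrank_prod, Module.finrank_fintype_fun_eq_card, Fintype.card_coe]
  have hnli : ¬ LinearIndependent ℝ v := by
    intro h
    have := LinearIndependent.fintype_card_le_finrank h
    rw [hdim, Fintype.card_coe] at this
    omega
  obtain ⟨c, hc0, i₀, hi₀⟩ := Fintype.not_linearIndependent_iff.mp hnli
  -- reduce to the case where some coefficient is positive
  suffices key : ∀ c : ↥u → ℝ, (∑ i, c i • v i = 0) → (∃ i, 0 < c i) → False by
    rcases lt_trichotomy (c i₀) 0 with h1 | h1 | h1
    · refine key (-c) ?_ ⟨i₀, by simpa using h1⟩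
      have : ∑ i, (-c) i • v i = -∑ i, c i • v i := by
        rw [← Finset.sum_neg_distrib]
        apply Finset.sum_congr rfl
        intro x _
        simp [neg_smul]
      rw [this, hc0, neg_zero]
    · exact hi₀ h1
    · exact key c hc0 ⟨i₀, h1⟩
  clear hc0 hi₀ c
  rintro c hc ⟨j₀, hj₀⟩
  set t : Finset (Fin d → ℝ) := (u.attach.filter (fun x => 0 < c x)).image Subtype.val with htdef
  have ht : t ⊆ u := by
    intro x hx
    obtain ⟨y, _, rfl⟩ := Finset.mem_image.mp hx
    exact y.2
  have hmem : ∀ y : ↥u, ((y : Fin d → ℝ) ∈ t ↔ 0 < c y) := by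
    intro y
    rw [htdef]
    simp only [Finset.mem_image, Finset.mem_filter, Finset.mem_attach, true_and]
    constructor
    · rintro ⟨z, hz, hzy⟩
      cases Subtype.ext hzy
      exact hz
    · intro h
      exact ⟨y, h, rfl⟩
  obtain ⟨w, b, hw, hiff⟩ := H t ht
  -- component equations
  have hfst : ∑ x : ↥u, c x • (fun i : ↥S => (x : Fin d → ℝ) i.1) = 0 := by
    have h1 := congrArg (LinearMap.fst ℝ (↥S → ℝ) ℝ) hc
    simpa [map_sum, v] using h1
  have hsnd : ∑ x : ↥u, c x • (1:ℝ) = 0 := by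
    have h1 := congrArg (LinearMap.snd ℝ (↥S → ℝ) ℝ) hc
    simpa [map_sum, v] using h1
  have hsum1 : ∀ i : ↥S, ∑ x : ↥u, c x * (x : Fin d → ℝ) i.1 = 0 := by
    intro i
    have h1 := congrFun hfst i
    simpa [Finset.sum_apply, Pi.smul_apply, smul_eq_mul] using h1
  have hsum2 : ∑ x : ↥u, c x = 0 := by
    simpa [smul_eq_mul] using hsnd
  -- the weighted sum of the affine function values is zero
  have hzero : ∑ x : ↥u, c x * ((∑ i, w i * (x : Fin d → ℝ) i) + b) = 0 := by
    have e1 : ∀ x : ↥u, c x * ((∑ i, w i * (x : Fin d → ℝ) i) + b)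
        = (∑ i, w i * (c x * (x : Fin d → ℝ) i)) + c x * b := by
      intro x
      rw [mul_add]
      congr 1
      rw [Finset.mul_sum]
      exact Finset.sum_congr rfl (fun i _ => by ring)
    rw [Finset.sum_congr rfl (fun x _ => e1 x), Finset.sum_add_distrib, Finset.sum_comm]
    have e2 : ∀ i : Fin d, ∑ x : ↥u, w i * (c x * (x : Fin d → ℝ) i) = 0 := by
      intro i
      by_cases hi : i ∈ S
      · have := hsum1 ⟨i, hi⟩
        rw [← Finset.mul_sum]
        simp only at this
        rw [this, mul_zero]
      · have hwi : w i = 0 := by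
          by_contra hne
          exact hi (hw hne)
        simp [hwi]
    rw [Finset.sum_congr rfl (fun i _ => e2 i)]
    rw [← Finset.sum_mul, hsum2]
    simp
  -- but it is positive
  have hpos : 0 < ∑ x : ↥u, c x * ((∑ i, w i * (x : Fin d → ℝ) i) + b) := by
    apply Finset.sum_pos'
    · intro x _
      rcases le_or_gt (c x) 0 with h | h
      · have hnt : (x : Fin d → ℝ) ∉ t := fun hmem' => by
          have := (hmem x).mp hmem'
          linarith
        have hg : ¬ (0 < (∑ i, w i * (x : Fin d → ℝ) i) + b) := fun hg =>
          hnt ((hiff _ x.2).mp hg)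
        have hg' : (∑ i, w i * (x : Fin d → ℝ) i) + b ≤ 0 := not_lt.mp hg
        nlinarith [h, hg']
      · have hint : (x : Fin d → ℝ) ∈ t := (hmem x).mpr h
        have hg : 0 < (∑ i, w i * (x : Fin d → ℝ) i) + b := (hiff _ x.2).mpr hint
        positivity
    · refine ⟨j₀, Finset.mem_univ _, ?_⟩
      have hint : (j₀ : Fin d → ℝ) ∈ t := (hmem j₀).mpr hj₀
      have hg : 0 < (∑ i, w i * (j₀ : Fin d → ℝ) i) + b := (hiff _ j₀.2).mpr hint
      exact mul_pos hj₀ hg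
  linarith

private lemma aux_counting {d M : ℕ} (hMd : M ≤ d) (s : Finset (Fin d → ℝ))
    (hs : Shatters { f : (Fin d → ℝ) → Prop | ∃ (w : Fin d → ℝ) (b : ℝ),
          (∑ i, (w i) ^ 2) = 1 ∧ {i | w i ≠ 0}.ncard ≤ M ∧
          ∀ x, f x ↔ 0 < (∑ i, w i * x i) + b } s) :
    2 ^ s.card ≤ d.choose M * ∑ k ∈ Finset.Iic (M+1), (s.card).choose k := by
  classical
  set n := s.card with hn
  let 𝒜 : Finset (Fin d) → Finset (Finset ↥s) := fun S =>
    (Finset.univ : Finset ↥s).powerset.filter (fun t => ∃ (w : Fin d → ℝ) (b : ℝ),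
      {i | w i ≠ 0} ⊆ ↑S ∧ ∀ x : ↥s, x ∈ t ↔ 0 < (∑ i, w i * (x : Fin d → ℝ) i) + b)
  -- step 1 : every subset is covered
  have hcover : (Finset.univ : Finset ↥s).powerset ⊆
      (Finset.powersetCard M (Finset.univ : Finset (Fin d))).biUnion 𝒜 := by
    intro t ht
    obtain ⟨f, hfF, hft⟩ := hs (t.image Subtype.val) (by
      intro x hx
      obtain ⟨y, _, rfl⟩ := Finset.mem_image.mp hx
      exact y.2)
    obtain ⟨w, b, hnorm, hsp, hf⟩ := hfF
    have hfin : {i | w i ≠ 0}.Finite := Set.toFinite _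
    have hTcard : hfin.toFinset.card ≤ M := by
      have h1 : (↑hfin.toFinset : Set (Fin d)).ncard = hfin.toFinset.card :=
        Set.ncard_coe_finset hfin.toFinset
      rw [Set.Finite.coe_toFinset] at h1
      omega
    obtain ⟨S, hTS, _, hScard⟩ := Finset.exists_subsuperset_card_eq
      (Finset.subset_univ hfin.toFinset) hTcard
      (by rw [Finset.card_univ, Fintype.card_fin]; exact hMd)
    refine Finset.mem_biUnion.mpr ⟨S, Finset.mem_powersetCard_univ.mpr hScard, ?_⟩
    refine Finset.mem_filter.mpr ⟨ht, w, b, ?_, ?_⟩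
    · intro i hi
      exact hTS (hfin.mem_toFinset.mpr hi)
    · intro x
      have h1 : ((x : Fin d → ℝ) ∈ t.image Subtype.val) ↔ x ∈ t := by
        rw [Finset.mem_image]
        constructor
        · rintro ⟨y, hy, hyx⟩
          cases Subtype.ext hyx
          exact hy
        · intro h
          exact ⟨x, h, rfl⟩
      exact Iff.trans (Iff.trans h1.symm (hft (↑x) x.2).symm) (hf (↑x))
  -- step 2 : VC dimension of each family is at most M+1
  have hvc : ∀ S : Finset (Fin d), S.card = M → (𝒜 S).vcDim ≤ M + 1 := by
    intro S hScard
    apply Finset.sup_le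
    intro u hu
    rw [Finset.mem_shatterer] at hu
    by_contra hcard
    push_neg at hcard
    obtain ⟨u', hu'sub, hu'card⟩ := Finset.exists_subset_card_eq (s := u) (n := M+2) (by omega)
    have hu'sh : (𝒜 S).Shatters u' := Finset.Shatters.mono_right hu'sub hu
    apply aux_trace S (u'.image Subtype.val)
    · rw [Finset.card_image_of_injective _ Subtype.val_injective, hu'card, hScard]
    · intro t ht
      obtain ⟨a, ha, hat⟩ := hu'sh (Finset.filter_subset (fun y => ↑y ∈ t) u')
      obtain ⟨w, b, hw, hiffa⟩ := (Finset.mem_filter.mp ha).2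
      refine ⟨w, b, hw, ?_⟩
      intro x hx
      obtain ⟨y, hy, rfl⟩ := Finset.mem_image.mp hx
      constructor
      · intro hg
        have hya : y ∈ a := (hiffa y).mpr hg
        have hm : y ∈ u' ∩ a := Finset.mem_inter.mpr ⟨hy, hya⟩
        rw [hat] at hm
        exact (Finset.mem_filter.mp hm).2
      · intro hyt
        have hm : y ∈ u' ∩ a := by
          rw [hat]
          exact Finset.mem_filter.mpr ⟨hy, hyt⟩
        exact (hiffa y).mp (Finset.mem_inter.mp hm).2
  -- step 3 : counting
  calc 2^n = (Finset.univ : Finset ↥s).powerset.card := by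
        rw [Finset.card_powerset, Finset.card_univ, Fintype.card_coe]
    _ ≤ ((Finset.powersetCard M (Finset.univ : Finset (Fin d))).biUnion 𝒜).card :=
        Finset.card_le_card hcover
    _ ≤ ∑ S ∈ Finset.powersetCard M (Finset.univ : Finset (Fin d)), (𝒜 S).card :=
        Finset.card_biUnion_le
    _ ≤ ∑ _S ∈ Finset.powersetCard M (Finset.univ : Finset (Fin d)),
          ∑ k ∈ Finset.Iic (M+1), n.choose k := by
        apply Finset.sum_le_sum
        intro S hS
        have hScard : S.card = M := Finset.mem_powersetCard_univ.mp hS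
        calc (𝒜 S).card ≤ (𝒜 S).shatterer.card := Finset.card_le_card_shatterer _
          _ ≤ ∑ k ∈ Finset.Iic (𝒜 S).vcDim, (Fintype.card ↥s).choose k :=
              Finset.card_shatterer_le_sum_vcDim
          _ ≤ ∑ k ∈ Finset.Iic (M+1), (Fintype.card ↥s).choose k :=
              Finset.sum_le_sum_of_subset (Finset.Iic_subset_Iic.mpr (hvc S hScard))
          _ = ∑ k ∈ Finset.Iic (M+1), n.choose k := by rw [Fintype.card_coe]
    _ = (Finset.powersetCard M (Finset.univ : Finset (Fin d))).card *
          ∑ k ∈ Finset.Iic (M+1), n.choose k := by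
        rw [Finset.sum_const, smul_eq_mul]
    _ = d.choose M * ∑ k ∈ Finset.Iic (M+1), n.choose k := by
        rw [Finset.card_powersetCard, Finset.card_univ, Fintype.card_fin]

private lemma aux_lower (d M : ℕ) (hM1 : 1 ≤ M) (hMd : M ≤ d) :
    ∃ s : Finset (Fin d → ℝ),
      Shatters { f : (Fin d → ℝ) → Prop | ∃ (w : Fin d → ℝ) (b : ℝ),
          (∑ i, (w i) ^ 2) = 1 ∧ {i | w i ≠ 0}.ncard ≤ M ∧
          ∀ x, f x ↔ 0 < (∑ i, w i * x i) + b } s ∧ s.card = M := by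
  classical
  have hM0 : (0:ℝ) < M := by exact_mod_cast hM1
  -- the points : indicator vectors
  set p : Fin M → (Fin d → ℝ) := fun j i => if (i : ℕ) = (j : ℕ) then 1 else 0 with hp
  have hpinj : Function.Injective p := by
    intro j j' h
    by_contra hne
    have hne' : ¬((j:ℕ) = (j':ℕ)) := fun h' => hne (Fin.ext h')
    have h2 := congrFun h (Fin.castLE hMd j)
    simp [hp, Fin.coe_castLE, hne'] at h2
  refine ⟨Finset.image p Finset.univ, ?_, ?_⟩
  swap
  · rw [Finset.card_image_of_injective _ hpinj, Finset.card_univ, Fintype.card_fin]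
  intro t ht
  set c : ℝ := 1 / Real.sqrt M with hc
  have hc0 : 0 < c := by
    rw [hc]
    positivity
  have hc2 : c^2 = 1 / M := by
    rw [hc, div_pow, one_pow, Real.sq_sqrt hM0.le]
  set w : Fin d → ℝ := fun i => if h : (i : ℕ) < M then (if p ⟨i, h⟩ ∈ t then c else -c) else 0
    with hw
  -- generic summation reduction
  have hsum : ∀ g : Fin d → ℝ, (∀ i : Fin d, (¬ (i:ℕ) < M) → g i = 0) →
      ∑ i, g i = ∑ j : Fin M, g (Fin.castLE hMd j) := by
    intro g hg
    have e1 : ∑ j : Fin M, g (Fin.castLE hMd j)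
        = ∑ i ∈ Finset.image (Fin.castLE hMd) Finset.univ, g i :=
      (Finset.sum_image (fun x _ y _ h => Fin.castLE_injective hMd h)).symm
    rw [e1]
    symm
    apply Finset.sum_subset (Finset.subset_univ _)
    intro i _ hi
    apply hg
    intro hlt
    exact hi (Finset.mem_image.mpr ⟨⟨(i:ℕ), hlt⟩, Finset.mem_univ _, Fin.ext rfl⟩)
  refine ⟨fun x => 0 < (∑ i, w i * x i) + 0, ⟨w, 0, ?_, ?_, fun x => Iff.rfl⟩, ?_⟩
  · -- norm one
    have h1 : ∑ i, (w i)^2 = ∑ j : Fin M, (w (Fin.castLE hMd j))^2 := by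
      apply hsum (fun i => (w i)^2)
      intro i hi
      rw [hw]
      simp only [dif_neg hi]
      ring
    rw [h1]
    have h2 : ∀ j : Fin M, (w (Fin.castLE hMd j))^2 = c^2 := by
      intro j
      rw [hw]
      simp only [Fin.coe_castLE, dif_pos j.2]
      split_ifs <;> ring
    rw [Finset.sum_congr rfl (fun j _ => h2 j), Finset.sum_const, Finset.card_univ,
      Fintype.card_fin, hc2, nsmul_eq_mul]
    field_simp
  · -- sparsity
    have hsub : {i : Fin d | w i ≠ 0} ⊆ ↑(Finset.image (Fin.castLE hMd) Finset.univ) := by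
      intro i hi
      simp only [Set.mem_setOf_eq, hw] at hi
      by_cases h : (i:ℕ) < M
      · exact Finset.mem_coe.mpr (Finset.mem_image.mpr ⟨⟨(i:ℕ), h⟩, Finset.mem_univ _, Fin.ext rfl⟩)
      · exact absurd (dif_neg h) hi
    calc {i : Fin d | w i ≠ 0}.ncard
        ≤ (↑(Finset.image (Fin.castLE hMd) Finset.univ) : Set (Fin d)).ncard :=
          Set.ncard_le_ncard hsub (Set.toFinite _)
      _ = (Finset.image (Fin.castLE hMd) Finset.univ).card := Set.ncard_coe_finset _
      _ = M := by
          rw [Finset.card_image_of_injective _ (Fin.castLE_injective hMd), Finset.card_univ,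
            Fintype.card_fin]
  · -- picks out t
    intro x hx
    obtain ⟨j, _, rfl⟩ := Finset.mem_image.mp hx
    have hval : ∑ i, w i * p j i = w (Fin.castLE hMd j) := by
      have h1 : ∑ i, w i * p j i = ∑ j' : Fin M, w (Fin.castLE hMd j') * p j (Fin.castLE hMd j') := by
        apply hsum (fun i => w i * p j i)
        intro i hi
        have : p j i = 0 := by
          rw [hp]
          simp only
          rw [if_neg]
          intro h
          exact hi (h ▸ j.2)
        rw [this, mul_zero]
      rw [h1]
      have h2 : ∀ j' : Fin M, w (Fin.castLE hMd j') * p j (Fin.castLE hMd j')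
          = if j' = j then w (Fin.castLE hMd j) else 0 := by
        intro j'
        rw [hp]
        simp only [Fin.coe_castLE]
        by_cases h : (j' : ℕ) = (j : ℕ)
        · have : j' = j := Fin.ext h
          subst this
          rw [if_pos rfl, if_pos rfl, mul_one]
        · rw [if_neg h, if_neg (fun h' => h (by rw [h'])), mul_zero]
      rw [Finset.sum_congr rfl (fun j' _ => h2 j')]
      simp
    have hwj : w (Fin.castLE hMd j) = if p j ∈ t then c else -c := by
      rw [hw]
      simp only [Fin.coe_castLE, dif_pos j.2]
    show (0 < (∑ i, w i * p j i) + 0 ↔ p j ∈ t)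
    rw [hval, add_zero, hwj]
    split_ifs with h
    · simpa [h] using hc0
    · simp only [h, iff_false, not_lt]
      linarith

/-- VC dimension of the class `F_M = { x ↦ 1_{⟨w,x⟩ + b > 0} : ‖w‖₂ = 1, ‖w‖₀ ≤ M, b ∈ ℝ }`:
some set of size `M` is shattered, and every shattered set has size at most
`6 M log(e d / M)`. -/
theorem stmt5 (d M : ℕ) (hM1 : 1 ≤ M) (hMd : M ≤ d) :
    (∃ s : Finset (Fin d → ℝ),
      Shatters { f : (Fin d → ℝ) → Prop | ∃ (w : Fin d → ℝ) (b : ℝ),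
          (∑ i, (w i) ^ 2) = 1 ∧ {i | w i ≠ 0}.ncard ≤ M ∧
          ∀ x, f x ↔ 0 < (∑ i, w i * x i) + b } s ∧ s.card = M) ∧
    (∀ s : Finset (Fin d → ℝ),
      Shatters { f : (Fin d → ℝ) → Prop | ∃ (w : Fin d → ℝ) (b : ℝ),
          (∑ i, (w i) ^ 2) = 1 ∧ {i | w i ≠ 0}.ncard ≤ M ∧
          ∀ x, f x ↔ 0 < (∑ i, w i * x i) + b } s →
      (s.card : ℝ) ≤ 6 * M * Real.log (Real.exp 1 * d / M)) := by
  constructor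
  · exact aux_lower d M hM1 hMd
  · intro s hshat
    by_contra hgt
    push_neg at hgt
    have hcount := aux_counting hMd s hshat
    set n := s.card with hndef
    have hM0 : (0:ℝ) < M := by exact_mod_cast hM1
    rcases eq_or_lt_of_le hMd with hdm | hdm
    · -- case d = M
      subst hdm
      have hL1 : Real.log (Real.exp 1 * M / M) = 1 := by
        rw [mul_div_assoc, div_self (ne_of_gt hM0), mul_one, Real.log_exp]
      rw [hL1, mul_one] at hgt
      have hn6 : 6*M < n := by exact_mod_cast hgt
      have hhalf := aux_halving (show 2*(M+1) < n by omega)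
      rw [Nat.choose_self, one_mul] at hcount
      have hpos : 0 < 2^n := by positivity
      omega
    · -- case M < d
      set L := Real.log (Real.exp 1 * d / M) with hLdef
      have hd0 : (0:ℝ) < d := by
        have : (0:ℕ) < d := by omega
        exact_mod_cast this
      have hL : 1 + Real.log (1 + 1/(M:ℝ)) ≤ L := by
        rw [hLdef]
        have e : Real.exp 1 * (d:ℝ) / M = Real.exp 1 * ((d:ℝ)/M) := by ring
        rw [e, Real.log_mul (Real.exp_ne_zero 1) (by positivity), Real.log_exp]
        have e2 : (1:ℝ) + 1/(M:ℝ) = ((M:ℝ)+1)/M := by field_simp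
        have hdM1 : (M:ℝ)+1 ≤ (d:ℝ) := by
          have : (M+1 : ℕ) ≤ d := by omega
          exact_mod_cast this
        have h2 : Real.log (1 + 1/(M:ℝ)) ≤ Real.log ((d:ℝ)/M) := by
          apply Real.log_le_log (by positivity)
          rw [e2]
          exact div_le_div_of_nonneg_right hdM1 hM0.le
        linarith
      have hlogpos : 0 ≤ Real.log (1 + 1/(M:ℝ)) := Real.log_nonneg (by
        have : (0:ℝ) < 1/(M:ℝ) := by positivity
        linarith)
      have hL1 : (1:ℝ) ≤ L := by linarith
      have hngt : 6*(M:ℝ)*L < (n:ℝ) := hgt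
      have hm1R : (1:ℝ) ≤ (M:ℝ) := by exact_mod_cast hM1
      have hnM : M+2 ≤ n := by
        have h0 : 6*(M:ℝ)*1 ≤ 6*(M:ℝ)*L :=
          mul_le_mul_of_nonneg_left hL1 (by positivity)
        have h1 : ((M:ℝ))+2 ≤ 6*(M:ℝ)*L := by linarith
        have h2 : ((M+2 : ℕ) : ℝ) ≤ (n:ℝ) := by push_cast; linarith
        exact_mod_cast h2
      have hn0R : (0:ℝ) < (n:ℝ) := by
        have : 0 < n := by omega
        exact_mod_cast this
      -- binomial coefficient bound
      have hCbound : (d.choose M : ℝ) ≤ (Real.exp 1 * d / M)^M / Real.exp 1 := by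
        have h1 : (d.choose M : ℝ) ≤ (d:ℝ)^M / M.factorial := Nat.choose_le_pow_div M d
        have h2 := aux_fact M hM1
        have e1 : (Real.exp 1 * (d:ℝ) / M)^M = Real.exp 1^M * (d:ℝ)^M / (M:ℝ)^M := by
          rw [div_pow, mul_pow]
        rw [e1, div_div]
        have hfp : (0:ℝ) < M.factorial := by exact_mod_cast M.factorial_pos
        have hgoal : (d:ℝ)^M / M.factorial ≤ Real.exp 1^M * (d:ℝ)^M/((M:ℝ)^M * Real.exp 1) := by
          rw [div_le_div_iff₀ hfp (by positivity)]
          nlinarith [mul_le_mul_of_nonneg_left h2 (show (0:ℝ) ≤ (d:ℝ)^M by positivity)]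
        linarith
      have hSbound := aux_sum_choose n (M+1) (by omega) (by omega)
      have hprodpos1 : (0:ℝ) < (Real.exp 1 * d / M)^M / Real.exp 1 := by positivity
      have hprodpos2 : (0:ℝ) < (Real.exp 1 * n / (M+1:ℕ))^(M+1) := by positivity
      have hmain : (2:ℝ)^n ≤ ((Real.exp 1 * d / M)^M / Real.exp 1) *
          (Real.exp 1 * n / (M+1:ℕ))^(M+1) := by
        calc (2:ℝ)^n = ((2^n : ℕ) : ℝ) := by push_cast; ring
          _ ≤ ((d.choose M * ∑ k ∈ Finset.Iic (M+1), n.choose k : ℕ) : ℝ) := by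
              exact_mod_cast hcount
          _ = (d.choose M : ℝ) * ((∑ k ∈ Finset.Iic (M+1), n.choose k : ℕ) : ℝ) := by
              push_cast; ring
          _ ≤ _ := by
              apply mul_le_mul hCbound hSbound (by positivity) (le_of_lt hprodpos1)
      have hlog := Real.log_le_log (by positivity) hmain
      rw [Real.log_pow, Real.log_mul (ne_of_gt hprodpos1) (ne_of_gt hprodpos2),
        Real.log_div (by positivity) (Real.exp_ne_zero 1), Real.log_pow, Real.log_pow,
        Real.log_exp] at hlog
      have hlogB : Real.log (Real.exp 1 * n / (M+1:ℕ)) = 1 + Real.log (n:ℝ) - Real.log ((M:ℝ)+1) := by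
        rw [Real.log_div (by positivity) (by positivity), Real.log_mul (Real.exp_ne_zero 1)
          (ne_of_gt hn0R), Real.log_exp]
        push_cast
        ring
      rw [hlogB] at hlog
      have hfinal := aux_analytic M hM1 L (n:ℝ) hL (le_of_lt hngt)
      rw [← hLdef] at hlog
      push_cast at hlog
      linarith
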